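/- Let (G,κ) be a proper edge coloring of a tree. Then either the centralizer of 𝔊_κ in Sym(V(G)) is trivial, or |V(G)| = 2m is even and there is an injective group homomorphism from 𝔊_κ into the hyperoctahedral group C₂ ≀ S_m, i.e. the wreath product ((Z/2Z)^m) ⋊ S_m with S_m permuting the m coordinates (equivalently, the group of signed permutations of m letters). -/

import Mathlib

open scoped Classical

/-- A proper edge coloring of a finite simple graph `G` with colors `{1, …, k}`:
it assigns colors in `{1, …, k}` to edges, is surjective onto `{1, …, k}`, and
incident edges receive distinct colors. -/
def IsProperEdgeColoring {V : Type*} (G : SimpleGraph V) (k : ℕ) (κ : Sym2 V → ℕ) : Prop :=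
  (∀ e ∈ G.edgeSet, κ e ∈ Finset.Icc 1 k) ∧
  (∀ a ∈ Finset.Icc 1 k, ∃ e ∈ G.edgeSet, κ e = a) ∧
  (∀ u v w : V, G.Adj u v → G.Adj u w → v ≠ w → κ s(u, v) ≠ κ s(u, w))
/-- `IsToggle G κ a τ` says that the permutation `τ` is the product of the
transpositions `(i j)` over all edges `{i,j}` of `G` colored `a`: it swaps the two
endpoints of every edge colored `a` and fixes all other vertices. -/
def IsToggle {V : Type*} (G : SimpleGraph V) (κ : Sym2 V → ℕ) (a : ℕ) (τ : Equiv.Perm V) : Prop :=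
  ∀ v w : V, v ≠ w → (τ v = w ↔ G.Adj v w ∧ κ s(v, w) = a)
/-- The coloring group `𝔊_κ`: the subgroup of `Sym(V)` generated by the
permutations `τ_1, …, τ_k` associated to the colors `1, …, k`. -/
def coloringGroup {V : Type*} (G : SimpleGraph V) (k : ℕ) (κ : Sym2 V → ℕ) :
    Subgroup (Equiv.Perm V) :=
  Subgroup.closure { τ : Equiv.Perm V | ∃ a : ℕ, 1 ≤ a ∧ a ≤ k ∧ IsToggle G κ a τ }
/-- The "negation" permutation of `Fin m × Bool` (the set of `m` letters with signs),
flipping the sign of every letter. The hyperoctahedral group `C₂ ≀ S_m` of signed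
permutations of `m` letters is realized as the centralizer of this permutation in
`Sym(Fin m × Bool)`. -/
def negPerm (m : ℕ) : Equiv.Perm (Fin m × Bool) :=
  Equiv.prodCongr (Equiv.refl (Fin m)) ⟨Bool.not, Bool.not, Bool.not_not, Bool.not_not⟩

section Aux

open SimpleGraph

variable {V : Type*}

/-- Toggles exist for every color, given properness. -/
lemma exists_toggle (G : SimpleGraph V) (κ : Sym2 V → ℕ)
    (hκ3 : ∀ u v w : V, G.Adj u v → G.Adj u w → v ≠ w → κ s(u, v) ≠ κ s(u, w)) (a : ℕ) :
    ∃ τ : Equiv.Perm V, IsToggle G κ a τ := by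
  classical
  have huniq : ∀ v w w' : V, G.Adj v w → κ s(v, w) = a → G.Adj v w' → κ s(v, w') = a →
      w = w' := by
    intro v w w' h1 h2 h3 h4
    by_contra hne
    exact hκ3 v w w' h1 h3 hne (h2.trans h4.symm)
  set f : V → V := fun v => if h : ∃ w, G.Adj v w ∧ κ s(v, w) = a then h.choose else v with hf
  have hfspec : ∀ v w, G.Adj v w → κ s(v, w) = a → f v = w := by
    intro v w h1 h2
    have hex : ∃ w, G.Adj v w ∧ κ s(v, w) = a := ⟨w, h1, h2⟩
    simp only [hf, dif_pos hex]
    exact huniq v _ w hex.choose_spec.1 hex.choose_spec.2 h1 h2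
  have hmemspec : ∀ v, (∃ w, G.Adj v w ∧ κ s(v, w) = a) → G.Adj v (f v) ∧ κ s(v, f v) = a := by
    intro v hex
    have h1 : f v = hex.choose := by simp only [hf, dif_pos hex]
    rw [h1]
    exact hex.choose_spec
  have hnone : ∀ v, ¬(∃ w, G.Adj v w ∧ κ s(v, w) = a) → f v = v := by
    intro v hex
    simp only [hf, dif_neg hex]
  have hinv : Function.Involutive f := by
    intro v
    by_cases hex : ∃ w, G.Adj v w ∧ κ s(v, w) = a
    · obtain ⟨h1, h2⟩ := hmemspec v hex
      exact hfspec (f v) v h1.symm (by rwa [Sym2.eq_swap])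
    · rw [hnone v hex, hnone v hex]
  refine ⟨hinv.toPerm f, ?_⟩
  intro v w hne
  have happ : hinv.toPerm f v = f v := rfl
  rw [happ]
  constructor
  · intro h
    by_cases hex : ∃ w, G.Adj v w ∧ κ s(v, w) = a
    · obtain ⟨h1, h2⟩ := hmemspec v hex
      rw [h] at h1 h2
      exact ⟨h1, h2⟩
    · exact absurd (h ▸ (hnone v hex).symm) hne
  · intro hc
    exact hfspec v w hc.1 hc.2

/-- Any toggle of a color of an actual edge lies in the coloring group. -/
lemma toggle_mem_coloringGroup (G : SimpleGraph V) (k : ℕ) (κ : Sym2 V → ℕ)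
    (hκ : IsProperEdgeColoring G k κ) {u w : V} (h : G.Adj u w) {τ : Equiv.Perm V}
    (hτ : IsToggle G κ (κ s(u, w)) τ) : τ ∈ coloringGroup G k κ := by
  have hmem : κ s(u, w) ∈ Finset.Icc 1 k := hκ.1 _ (G.mem_edgeSet.2 h)
  rw [Finset.mem_Icc] at hmem
  exact Subgroup.subset_closure ⟨κ s(u, w), hmem.1, hmem.2, hτ⟩

/-- The coloring group acts transitively on a connected graph. -/
lemma coloringGroup_transitive (G : SimpleGraph V) (k : ℕ) (κ : Sym2 V → ℕ)
    (hκ : IsProperEdgeColoring G k κ) (hc : G.Connected) (u v : V) :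
    ∃ g ∈ coloringGroup G k κ, g u = v := by
  obtain ⟨p⟩ := hc u v
  induction p with
  | nil => exact ⟨1, one_mem _, rfl⟩
  | @cons u b v h q ih =>
    obtain ⟨g, hg, hgu⟩ := ih
    obtain ⟨τ, hτ⟩ := exists_toggle G κ hκ.2.2 (κ s(u, b))
    have hτmem : τ ∈ coloringGroup G k κ := toggle_mem_coloringGroup G k κ hκ h hτ
    have hτu : τ u = b := (hτ u b h.ne).2 ⟨h, rfl⟩
    exact ⟨g * τ, mul_mem hg hτmem, by rw [Equiv.Perm.mul_apply, hτu, hgu]⟩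

/-- The centralizer of the coloring group acts freely. -/
lemma centralizer_semiregular (G : SimpleGraph V) (k : ℕ) (κ : Sym2 V → ℕ)
    (hκ : IsProperEdgeColoring G k κ) (hc : G.Connected) (σ : Equiv.Perm V)
    (hσ : σ ∈ Subgroup.centralizer (coloringGroup G k κ : Set (Equiv.Perm V)))
    (v : V) (hv : σ v = v) : σ = 1 := by
  ext w
  obtain ⟨g, hg, hgv⟩ := coloringGroup_transitive G k κ hκ hc v w
  have hcomm : g * σ = σ * g := Subgroup.mem_centralizer_iff.1 hσ g hg
  calc σ w = σ (g v) := by rw [hgv]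
    _ = (σ * g) v := rfl
    _ = (g * σ) v := by rw [hcomm]
    _ = g (σ v) := rfl
    _ = w := by rw [hv, hgv]

/-- Elements of the centralizer are graph automorphisms. -/
lemma centralizer_adj (G : SimpleGraph V) (k : ℕ) (κ : Sym2 V → ℕ)
    (hκ : IsProperEdgeColoring G k κ) (σ : Equiv.Perm V)
    (hσ : σ ∈ Subgroup.centralizer (coloringGroup G k κ : Set (Equiv.Perm V)))
    {u w : V} (h : G.Adj u w) : G.Adj (σ u) (σ w) ∧ κ s(σ u, σ w) = κ s(u, w) := by
  obtain ⟨τ, hτ⟩ := exists_toggle G κ hκ.2.2 (κ s(u, w))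
  have hτmem : τ ∈ coloringGroup G k κ := toggle_mem_coloringGroup G k κ hκ h hτ
  have hcomm : τ * σ = σ * τ := Subgroup.mem_centralizer_iff.1 hσ τ hτmem
  have h1 : τ u = w := (hτ u w h.ne).2 ⟨h, rfl⟩
  have h2 : τ (σ u) = σ w := by
    calc τ (σ u) = (τ * σ) u := rfl
      _ = (σ * τ) u := by rw [hcomm]
      _ = σ (τ u) := rfl
      _ = σ w := by rw [h1]
  have hne : σ u ≠ σ w := fun he => h.ne (σ.injective he)
  exact (hτ (σ u) (σ w) hne).1 h2

/-- Powers of an automorphism preserve adjacency. -/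
lemma pow_adj (G : SimpleGraph V) (σ : Equiv.Perm V)
    (hauto : ∀ u w : V, G.Adj u w → G.Adj (σ u) (σ w)) :
    ∀ (q : ℕ) (u w : V), G.Adj u w → G.Adj ((σ ^ q) u) ((σ ^ q) w) := by
  intro q
  induction q with
  | zero => intro u w h; simpa using h
  | succ q ih =>
    intro u w h
    have := ih (σ u) (σ w) (hauto u w h)
    rw [pow_succ]
    simpa [Equiv.Perm.mul_apply] using this

/-- Distance bound along a walk. -/
lemma dist_getVert_le (G : SimpleGraph V) (hc : G.Connected) {u v : V} (p : G.Walk u v)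
    (i : ℕ) : ∀ j, i ≤ j → j ≤ p.length → G.dist (p.getVert i) (p.getVert j) ≤ j - i := by
  intro j
  induction j with
  | zero =>
    intro h1 _
    obtain rfl : i = 0 := Nat.le_zero.1 h1
    simp
  | succ j ih =>
    intro h1 h2
    rcases Nat.lt_or_ge j i with hj | hj
    · obtain rfl : i = j + 1 := le_antisymm h1 hj
      simp
    · have hadj : G.Adj (p.getVert j) (p.getVert (j + 1)) := p.adj_getVert_succ (by omega)
      have htr : G.dist (p.getVert i) (p.getVert (j + 1)) ≤
          G.dist (p.getVert i) (p.getVert j) + G.dist (p.getVert j) (p.getVert (j + 1)) :=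
        hc.dist_triangle
      have h3 : G.dist (p.getVert j) (p.getVert (j + 1)) = 1 :=
        (SimpleGraph.dist_eq_one_iff_adj).2 hadj
      have h4 := ih hj (by omega)
      omega

/-- The walk along an infinite sequence of adjacent vertices. -/
def walkSeg (G : SimpleGraph V) (z : ℕ → V) (hadj : ∀ n, G.Adj (z n) (z (n + 1))) :
    ∀ (n i : ℕ), G.Walk (z i) (z (i + n))
  | 0, _ => SimpleGraph.Walk.nil
  | (n + 1), i =>
    (SimpleGraph.Walk.cons (hadj i) (walkSeg G z hadj n (i + 1))).copy rfl
      (congrArg z (show i + 1 + n = i + (n + 1) by omega))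

lemma walkSeg_length (G : SimpleGraph V) (z : ℕ → V) (hadj : ∀ n, G.Adj (z n) (z (n + 1))) :
    ∀ n i, (walkSeg G z hadj n i).length = n := by
  intro n
  induction n with
  | zero => intro i; rfl
  | succ n ih =>
    intro i
    rw [walkSeg, SimpleGraph.Walk.length_copy, SimpleGraph.Walk.length_cons, ih]

lemma walkSeg_support (G : SimpleGraph V) (z : ℕ → V) (hadj : ∀ n, G.Adj (z n) (z (n + 1))) :
    ∀ n i, (walkSeg G z hadj n i).support =
    (List.range (n + 1)).map (fun j => z (i + j)) := by
  intro n
  induction n with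
  | zero => intro i; simp [walkSeg, List.range_succ]
  | succ n ih =>
    intro i
    rw [walkSeg, SimpleGraph.Walk.support_copy, SimpleGraph.Walk.support_cons, ih]
    rw [List.range_succ_eq_map (n := n + 1)]
    simp only [List.map_cons, List.map_map, Function.comp_def, Nat.add_zero]
    rw [show (fun j => z (i + 1 + j)) = (fun j => z (i + (j + 1))) from
      funext fun j => congrArg z (by omega)]

lemma walkSeg_isPath (G : SimpleGraph V) (z : ℕ → V) (hadj : ∀ n, G.Adj (z n) (z (n + 1)))
    (hA : G.IsAcyclic) (hnb : ∀ n, z (n + 2) ≠ z n) :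
    ∀ n i, (walkSeg G z hadj n i).IsPath := by
  intro n
  induction n using Nat.strong_induction_on with
  | _ n ih =>
    intro i
    match n with
    | 0 => exact SimpleGraph.Walk.IsPath.nil
    | Nat.succ n =>
      rw [walkSeg, SimpleGraph.Walk.isPath_copy, SimpleGraph.Walk.cons_isPath_iff]
      refine ⟨ih n (by omega) (i + 1), ?_⟩
      intro hmem
      rw [walkSeg_support] at hmem
      simp only [List.mem_map, List.mem_range] at hmem
      obtain ⟨j, hj, hje⟩ := hmem
      match j with
      | 0 => exact (hadj i).ne (by simpa using hje.symm)
      | 1 => exact hnb i (by rw [show i + 1 + 1 = i + 2 by omega] at hje; exact hje)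
      | (j + 2) =>
        have hAdj2 : G.Adj (z i) (z (i + (j + 2))) := by
          have h1 := (hadj (i + (j + 2))).symm
          rw [show i + (j + 2) + 1 = i + 1 + (j + 2) by omega, hje] at h1
          exact h1
        set P1 : G.Walk (z i) (z (i + (j + 2))) := walkSeg G z hadj (j + 2) i with hP1def
        have hP1 : P1.IsPath := ih (j + 2) (by omega) i
        set P2 : G.Walk (z i) (z (i + (j + 2))) := SimpleGraph.Walk.cons hAdj2
          SimpleGraph.Walk.nil with hP2def
        have hP2 : P2.IsPath := by
          rw [hP2def, SimpleGraph.Walk.cons_isPath_iff]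
          exact ⟨SimpleGraph.Walk.IsPath.nil, by simpa using hAdj2.ne⟩
        have heq : P1 = P2 := by
          have := SimpleGraph.isAcyclic_iff_path_unique.1 hA ⟨P1, hP1⟩ ⟨P2, hP2⟩
          exact congrArg Subtype.val this
        have hlen : P1.length = j + 2 := walkSeg_length G z hadj (j + 2) i
        rw [heq, hP2def] at hlen
        simp at hlen

/-- A non-backtracking infinite walk in an acyclic graph is injective. -/
lemma noBacktrack_inj (G : SimpleGraph V) (z : ℕ → V)
    (hadj : ∀ n, G.Adj (z n) (z (n + 1))) (hA : G.IsAcyclic)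
    (hnb : ∀ n, z (n + 2) ≠ z n) : Function.Injective z := by
  have key : ∀ a b, a < b → z a ≠ z b := by
    intro a b hab he
    obtain ⟨m, rfl⟩ : ∃ m, b = a + (m + 1) := ⟨b - a - 1, by omega⟩
    have hpath := walkSeg_isPath G z hadj hA hnb (m + 1) a
    rw [walkSeg, SimpleGraph.Walk.isPath_copy, SimpleGraph.Walk.cons_isPath_iff] at hpath
    apply hpath.2
    rw [walkSeg_support]
    simp only [List.mem_map, List.mem_range]
    exact ⟨m, by omega, by rw [show a + 1 + m = a + (m + 1) by omega, ← he]⟩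
  intro a b he
  by_contra hne
  rcases Nat.lt_or_ge a b with h | h
  · exact key a b h he
  · exact key b a (by omega) he.symm

/-- A fixed-point-free involution gives a pairing of the vertex set. -/
lemma exists_pairing_equiv [Fintype V] (σ : Equiv.Perm V)
    (hσσ : ∀ v, σ (σ v) = v) (hfpf : ∀ v, σ v ≠ v) :
    ∃ (m : ℕ) (e : V ≃ Fin m × Bool), Fintype.card V = 2 * m ∧
      ∀ v, e (σ v) = negPerm m (e v) := by
  classical
  let s : Setoid V := ⟨fun v w => w = v ∨ w = σ v, by
    refine ⟨fun v => Or.inl rfl, ?_, ?_⟩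
    · intro v w h
      rcases h with h | h
      · exact Or.inl h.symm
      · exact Or.inr (by rw [h, hσσ])
    · intro u v w h1 h2
      rcases h1 with h1 | h1 <;> rcases h2 with h2 | h2
      · exact Or.inl (h2.trans h1)
      · exact Or.inr (h2.trans (congrArg σ h1))
      · exact Or.inr (h2.trans h1)
      · exact Or.inl ((h2.trans (congrArg σ h1)).trans (hσσ u))⟩
  haveI : Fintype (Quotient s) := Fintype.ofFinite _
  set rep : Quotient s → V := Quotient.out with hrep
  have hout : ∀ v : V, rep (Quotient.mk s v) = v ∨ rep (Quotient.mk s v) = σ v := by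
    intro v
    have h : v = rep (Quotient.mk s v) ∨ v = σ (rep (Quotient.mk s v)) :=
      Quotient.exact (Quotient.out_eq (Quotient.mk s v))
    rcases h with h | h
    · exact Or.inl h.symm
    · exact Or.inr ((hσσ _).symm.trans (congrArg σ h.symm))
  have hErl : ∀ v : V, (if decide (v = rep (Quotient.mk s v)) = true
      then rep (Quotient.mk s v) else σ (rep (Quotient.mk s v))) = v := by
    intro v
    rcases hout v with h | h
    · rw [if_pos]
      · exact h
      · simp only [decide_eq_true_eq]
        exact h.symm
    · rw [if_neg]
      · exact (congrArg σ h).trans (hσσ v)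
      · simp only [decide_eq_true_eq]
        intro he
        exact hfpf v (h.symm.trans he.symm)
  let E : V ≃ (Quotient s) × Bool :=
    { toFun := fun v => (Quotient.mk s v, decide (v = rep (Quotient.mk s v)))
      invFun := fun p => if p.2 then rep p.1 else σ (rep p.1)
      left_inv := fun v => hErl v
      right_inv := by
        rintro ⟨q, b⟩
        have hqout : Quotient.mk s (rep q) = q := Quotient.out_eq q
        cases b
        · have hqe : Quotient.mk s (σ (rep q)) = q :=
            (Quotient.sound (Or.inr (hσσ (rep q)).symm)).trans (Quotient.out_eq q)
          have hde : decide ((σ (rep q)) = rep (Quotient.mk s (σ (rep q)))) = false := by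
            simp only [decide_eq_false_iff_not]
            rw [hqe]
            exact hfpf (rep q)
          have hif : (if (false : Bool) = true then rep q else σ (rep q)) = σ (rep q) := by
            simp
          show ((Quotient.mk s (if (false : Bool) = true then rep q else σ (rep q))),
            decide ((if (false : Bool) = true then rep q else σ (rep q)) =
              rep (Quotient.mk s (if (false : Bool) = true then rep q else σ (rep q))))) =
            (q, false)
          rw [hif]
          exact Prod.ext hqe hde
        · have hde : decide ((rep q) = rep (Quotient.mk s (rep q))) = true := by
            simp only [decide_eq_true_eq]
            rw [hqout]
          have hif : (if (true : Bool) = true then rep q else σ (rep q)) = rep q := by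
            simp
          show ((Quotient.mk s (if (true : Bool) = true then rep q else σ (rep q))),
            decide ((if (true : Bool) = true then rep q else σ (rep q)) =
              rep (Quotient.mk s (if (true : Bool) = true then rep q else σ (rep q))))) =
            (q, true)
          rw [hif]
          exact Prod.ext hqout hde }
  refine ⟨Fintype.card (Quotient s),
    E.trans (Equiv.prodCongr (Fintype.equivFin (Quotient s)) (Equiv.refl Bool)), ?_, ?_⟩
  · rw [Fintype.card_congr (E.trans (Equiv.prodCongr (Fintype.equivFin (Quotient s))
      (Equiv.refl Bool))), Fintype.card_prod, Fintype.card_fin, Fintype.card_bool]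
    ring
  · intro v
    have hq : Quotient.mk s (σ v) = Quotient.mk s v := Quotient.sound (Or.inr (hσσ v).symm)
    have hb : (decide (σ v = rep (Quotient.mk s (σ v)))) =
        ! decide (v = rep (Quotient.mk s v)) := by
      rcases hout v with h | h
      · have h1 : ¬ σ v = rep (Quotient.mk s (σ v)) := by
          rw [hq, h]
          exact hfpf v
        have h2 : v = rep (Quotient.mk s v) := h.symm
        rw [decide_eq_false h1, decide_eq_true h2]
        rfl
      · have h1 : σ v = rep (Quotient.mk s (σ v)) := by rw [hq, h]
        have h2 : ¬ v = rep (Quotient.mk s v) := by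
          rw [h]
          exact fun he => hfpf v he.symm
        rw [decide_eq_true h1, decide_eq_false h2]
        rfl
    calc (E.trans (Equiv.prodCongr (Fintype.equivFin (Quotient s)) (Equiv.refl Bool))) (σ v)
        = (Fintype.equivFin (Quotient s) (Quotient.mk s (σ v)),
           decide (σ v = rep (Quotient.mk s (σ v)))) := rfl
      _ = (Fintype.equivFin (Quotient s) (Quotient.mk s v),
           ! decide (v = rep (Quotient.mk s v))) := by rw [hb, hq]
      _ = negPerm (Fintype.card (Quotient s))
          ((E.trans (Equiv.prodCongr (Fintype.equivFin (Quotient s)) (Equiv.refl Bool))) v) :=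
        rfl

end Aux

/-- For a proper edge coloring of a tree, either the centralizer of
`𝔊_κ` in `Sym(V)` is trivial, or `|V| = 2m` is even and `𝔊_κ` embeds into the
hyperoctahedral group `C₂ ≀ S_m` of signed permutations of `m` letters (realized as the
centralizer of the sign-flip involution in `Sym(Fin m × Bool)`). -/
theorem stmt_10 {V : Type*} [Fintype V] (G : SimpleGraph V) (hG : G.IsTree)
    (k : ℕ) (κ : Sym2 V → ℕ) (hκ : IsProperEdgeColoring G k κ) :
    (∀ σ ∈ Subgroup.centralizer (coloringGroup G k κ : Set (Equiv.Perm V)), σ = 1) ∨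
    (∃ m : ℕ, Fintype.card V = 2 * m ∧
      ∃ f : ↥(coloringGroup G k κ) →*
          ↥(Subgroup.centralizer ({negPerm m} : Set (Equiv.Perm (Fin m × Bool)))),
        Function.Injective f) := by
  classical
  by_cases htriv : ∀ σ ∈ Subgroup.centralizer (coloringGroup G k κ : Set (Equiv.Perm V)), σ = 1
  · exact Or.inl htriv
  right
  push_neg at htriv
  obtain ⟨σ, hσc, hσ1⟩ := htriv
  obtain ⟨hconn, hacyc⟩ := (SimpleGraph.isTree_iff _).1 hG
  have hsemi : ∀ τ : Equiv.Perm V,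
      τ ∈ Subgroup.centralizer (coloringGroup G k κ : Set (Equiv.Perm V)) →
      ∀ v, τ v = v → τ = 1 :=
    fun τ hτ v hv => centralizer_semiregular G k κ hκ hconn τ hτ v hv
  have hfpf : ∀ v, σ v ≠ v := fun v hv => hσ1 (hsemi σ hσc v hv)
  have hauto : ∀ u w : V, G.Adj u w → G.Adj (σ u) (σ w) :=
    fun u w h => (centralizer_adj G k κ hκ σ hσc h).1
  have hpow := pow_adj G σ hauto
  have key : ∀ d : ℕ, ∀ v : V, G.dist v (σ v) = d → σ * σ = 1 := by
    intro d
    induction d using Nat.strong_induction_on with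
    | _ d ih =>
      intro v hd
      have hne : σ v ≠ v := hfpf v
      have hd0 : 0 < d := by
        rcases Nat.eq_zero_or_pos d with h | h
        · exfalso
          rw [h] at hd
          exact hne ((hconn.dist_eq_zero_iff).1 hd).symm
        · exact h
      obtain ⟨p, hp⟩ := hconn.exists_walk_length_eq_dist v (σ v)
      have hlen : p.length = d := hp.trans hd
      set x : ℕ → V := p.getVert with hxdef
      have hx0 : x 0 = v := p.getVert_zero
      have hxd : x d = σ v := by rw [hxdef, ← hlen]; exact p.getVert_length
      have hxadj : ∀ i, i < d → G.Adj (x i) (x (i + 1)) := fun i hi =>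
        p.adj_getVert_succ (by omega)
      have hxne : ∀ i j, i < j → j ≤ d → x i ≠ x j := by
        intro i j hij hj he
        have h1 := dist_getVert_le G hconn p 0 i (by omega) (by omega)
        have h2 := dist_getVert_le G hconn p j d (by omega) (by omega)
        rw [← hxdef] at h1 h2
        have h3 : G.dist (x 0) (x d) ≤ G.dist (x 0) (x i) + G.dist (x i) (x d) :=
          hconn.dist_triangle
        have h4 : G.dist (x i) (x d) = G.dist (x j) (x d) := by rw [he]
        have h5 : G.dist (x 0) (x d) = d := by rw [hx0, hxd]; exact hd
        omega
      have hadj01 : G.Adj (x 0) (x 1) := hxadj 0 hd0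
      obtain ⟨τ, hτ⟩ := exists_toggle G κ hκ.2.2 (κ s(x 0, x 1))
      have hτmem : τ ∈ coloringGroup G k κ := toggle_mem_coloringGroup G k κ hκ hadj01 hτ
      have hτ01 : τ (x 0) = x 1 := (hτ _ _ hadj01.ne).2 ⟨hadj01, rfl⟩
      have hcomm : τ * σ = σ * τ := Subgroup.mem_centralizer_iff.1 hσc τ hτmem
      by_cases hcase : σ (x 1) = x (d - 1)
      · rcases Nat.eq_or_lt_of_le hd0 with h1 | h2
        · -- d = 1
          have hd1 : d = 1 := h1.symm
          have hσσv : (σ * σ) v = v := by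
            have hc0 : σ (x 1) = x 0 := by rw [hcase]; congr 1; omega
            have hx1 : x 1 = σ v := by rw [← hxd, hd1]
            calc (σ * σ) v = σ (σ v) := rfl
              _ = σ (x 1) := by rw [hx1]
              _ = x 0 := hc0
              _ = v := hx0
          exact hsemi (σ * σ) (mul_mem hσc hσc) v hσσv
        · -- d ≥ 2
          by_cases hfix : σ (x 1) = x 1
          · exact absurd (hsemi σ hσc _ hfix) hσ1
          · have hlt : G.dist (x 1) (σ (x 1)) < d := by
              rw [hcase]
              have h6 := dist_getVert_le G hconn p 1 (d - 1) (by omega) (by omega)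
              rw [← hxdef] at h6
              omega
            exact ih _ hlt (x 1) rfl
      · exfalso
        have hσx1 : σ (x 1) = τ (x d) := by
          calc σ (x 1) = σ (τ (x 0)) := by rw [hτ01]
            _ = (σ * τ) (x 0) := rfl
            _ = (τ * σ) (x 0) := by rw [hcomm]
            _ = τ (σ (x 0)) := rfl
            _ = τ (x d) := by rw [hx0, ← hxd]
        set z : ℕ → V := fun n => (σ ^ (n / d)) (x (n % d)) with hzdef
        have hzq : ∀ q r, r < d → z (q * d + r) = (σ ^ q) (x r) := by
          intro q r hr
          have h1 : (q * d + r) / d = q := by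
            rw [show q * d + r = r + q * d by omega, Nat.add_mul_div_right _ _ hd0,
              Nat.div_eq_of_lt hr]
            omega
          have h2 : (q * d + r) % d = r := by
            rw [show q * d + r = r + q * d by omega, Nat.add_mul_mod_self_right,
              Nat.mod_eq_of_lt hr]
          rw [hzdef]
          simp only
          rw [h1, h2]
        have hzσ : ∀ (q : ℕ) (u : V), (σ ^ (q + 1)) u = (σ ^ q) (σ u) := by
          intro q u
          rw [pow_succ]
          rfl
        have hzadj : ∀ n, G.Adj (z n) (z (n + 1)) := by
          intro n
          obtain ⟨q, r, hr, rfl⟩ : ∃ q r, r < d ∧ n = q * d + r :=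
            ⟨n / d, n % d, Nat.mod_lt _ hd0, (Nat.div_add_mod' n d).symm⟩
          rcases Nat.lt_or_ge (r + 1) d with h' | h'
          · rw [hzq q r hr, show q * d + r + 1 = q * d + (r + 1) by omega, hzq q (r + 1) h']
            exact hpow q _ _ (hxadj r (by omega))
          · have hrd : r = d - 1 := by omega
            rw [hzq q r hr, show q * d + r + 1 = (q + 1) * d + 0 by rw [Nat.add_mul]; omega, hzq (q + 1) 0 hd0]
            rw [hzσ q (x 0), hx0, ← hxd]
            have h5 := hxadj (d - 1) (by omega)
            rw [show d - 1 + 1 = d by omega] at h5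
            rw [hrd]
            exact hpow q _ _ h5
        have hznb : ∀ n, z (n + 2) ≠ z n := by
          intro n
          obtain ⟨q, r, hr, rfl⟩ : ∃ q r, r < d ∧ n = q * d + r :=
            ⟨n / d, n % d, Nat.mod_lt _ hd0, (Nat.div_add_mod' n d).symm⟩
          rcases Nat.lt_or_ge (r + 2) d with h' | h'
          · rw [hzq q r hr, show q * d + r + 2 = q * d + (r + 2) by omega, hzq q (r + 2) h']
            intro he
            exact hxne r (r + 2) (by omega) (by omega) ((Equiv.injective _) he).symm
          · rcases Nat.lt_or_ge (r + 1) d with h'' | h''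
            · -- r + 2 = d
              rw [hzq q r hr, show q * d + r + 2 = (q + 1) * d + 0 by rw [Nat.add_mul]; omega, hzq (q + 1) 0 hd0]
              rw [hzσ q (x 0), hx0, ← hxd]
              intro he
              exact hxne r d (by omega) (le_refl d) ((Equiv.injective _) he).symm
            · -- r = d - 1
              rcases Nat.eq_or_lt_of_le hd0 with hd1 | hd2
              · -- d = 1, r = 0
                have hd1' : d = 1 := hd1.symm
                have hr0 : r = 0 := by omega
                rw [hzq q r hr, show q * d + r + 2 = (q + 2) * d + 0 by rw [Nat.add_mul]; omega,
                  hzq (q + 2) 0 hd0]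
                rw [hzσ (q + 1) (x 0), hzσ q (σ (x 0))]
                intro he
                apply hcase
                have hx1 : x 1 = σ (x 0) := by rw [hx0, ← hxd, hd1']
                rw [hx1, show d - 1 = 0 by omega]
                rw [hr0] at he
                exact (Equiv.injective (σ ^ q)) he
              · -- d ≥ 2, r = d - 1
                rw [hzq q r hr, show q * d + r + 2 = (q + 1) * d + 1 by rw [Nat.add_mul]; omega,
                  hzq (q + 1) 1 (by omega)]
                rw [hzσ q (x 1)]
                intro he
                apply hcase
                rw [show d - 1 = r by omega]
                exact (Equiv.injective (σ ^ q)) he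
        have hinj := noBacktrack_inj G z hzadj hacyc hznb
        obtain ⟨n1, n2, hne12, he12⟩ := Finite.exists_ne_map_eq_of_infinite z
        exact hne12 (hinj he12)
  obtain ⟨v0⟩ := hconn.nonempty
  have hinv : σ * σ = 1 := key (G.dist v0 (σ v0)) v0 rfl
  have hσσ : ∀ v, σ (σ v) = v := by
    intro v
    have := congrArg (fun g : Equiv.Perm V => g v) hinv
    simpa using this
  obtain ⟨m, e, hcard, he⟩ := exists_pairing_equiv σ hσσ hfpf
  refine ⟨m, hcard, ?_⟩
  have hpt : ∀ g ∈ coloringGroup G k κ, ∀ w, σ (g w) = g (σ w) := by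
    intro g hg w
    have hcomm : g * σ = σ * g := Subgroup.mem_centralizer_iff.1 hσc g hg
    calc σ (g w) = (σ * g) w := rfl
      _ = (g * σ) w := by rw [hcomm]
      _ = g (σ w) := rfl
  have hswap : ∀ q : Fin m × Bool, σ (e.symm q) = e.symm (negPerm m q) := by
    intro q
    apply e.injective
    rw [he, Equiv.apply_symm_apply, Equiv.apply_symm_apply]
  have hmem : ∀ g : ↥(coloringGroup G k κ),
      e.permCongr g.1 ∈ Subgroup.centralizer ({negPerm m} : Set (Equiv.Perm (Fin m × Bool))) := by
    intro g
    rw [Subgroup.mem_centralizer_iff]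
    intro y hy
    rw [Set.mem_singleton_iff] at hy
    subst hy
    apply Equiv.ext
    intro q
    simp only [Equiv.Perm.mul_apply, Equiv.permCongr_apply]
    calc negPerm m (e (g.1 (e.symm q)))
        = e (σ (g.1 (e.symm q))) := (he _).symm
      _ = e (g.1 (σ (e.symm q))) := by rw [hpt g.1 g.2]
      _ = e (g.1 (e.symm (negPerm m q))) := by rw [hswap]
  refine ⟨{ toFun := fun g => ⟨e.permCongr g.1, hmem g⟩
            map_one' := ?_
            map_mul' := ?_ }, ?_⟩
  · apply Subtype.ext
    apply Equiv.ext
    intro q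
    simp
  · intro g h
    apply Subtype.ext
    apply Equiv.ext
    intro q
    simp [Equiv.Perm.mul_apply]
  · intro g h hgh
    have h1 : e.permCongr g.1 = e.permCongr h.1 := congrArg Subtype.val hgh
    have h2 : g.1 = h.1 := e.permCongr.injective h1
    exact Subtype.ext h2
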